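/- Let V be a nonlocal vertex algebra and (W, Y_W) a (left) quasi V-module-at-infinity. Then Y_W(𝒟v, x) = (d/dx) Y_W(v, x) for all v ∈ V, where 𝒟 is the canonical operator of V defined by 𝒟v = v_{−2}𝟏. -/

import Mathlib

/-- The generalized binomial coefficient `C(a, k) = a(a−1)⋯(a−k+1)/k!` for `a ∈ ℤ`. -/
noncomputable def intBinom (a : ℤ) (k : ℕ) : ℂ :=
  (∏ j ∈ Finset.range k, ((a : ℂ) - (j : ℂ))) / (k.factorial : ℂ)

/-- The coefficient of `x₁^a x₂^b` in `p(x₁,x₂) Y_W(u,x₁)Y_W(v,x₂)` applied to `w`,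
where `p ∈ ℂ[x₁][x₂]` is encoded as a polynomial in `x₁` (outer) with coefficients
polynomials in `x₂` (inner), and `Y_W(u,x) = Σ_n (Y_W u n) x^{−n−1}`. -/
noncomputable def prodCoef {V W : Type} [AddCommGroup V] [Module ℂ V]
    [AddCommGroup W] [Module ℂ W]
    (YW : V → ℤ → W →ₗ[ℂ] W) (p : Polynomial (Polynomial ℂ)) (u v : V)
    (a b : ℤ) (w : W) : W :=
  ∑ i ∈ p.support, ∑ j ∈ (p.coeff i).support,
    ((p.coeff i).coeff j) • YW u ((i : ℤ) - a - 1) (YW v ((j : ℤ) - b - 1) w)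

/-- The coefficient of `x₀^c x₂^l` in `p(x₂+x₀,x₂) Y_W(Y(u,x₀)v, x₂)` applied to `w`,
with `(x₂+x₀)^i` expanded by the binomial theorem (nonnegative powers of `x₀`). -/
noncomputable def iterCoef {V W : Type} [AddCommGroup V] [Module ℂ V]
    [AddCommGroup W] [Module ℂ W]
    (Y : V → ℤ → V →ₗ[ℂ] V) (YW : V → ℤ → W →ₗ[ℂ] W)
    (p : Polynomial (Polynomial ℂ)) (u v : V) (c l : ℤ) (w : W) : W :=
  ∑ i ∈ p.support, ∑ j ∈ (p.coeff i).support, ∑ s ∈ Finset.range (i + 1),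
    (((p.coeff i).coeff j) * (i.choose s : ℂ)) •
      YW (Y u ((s : ℤ) - c - 1) v) ((i : ℤ) + (j : ℤ) - (s : ℤ) - l - 1) w

lemma intBinom_zero (a : ℤ) : intBinom a 0 = 1 := by simp [intBinom]

lemma intBinom_one (a : ℤ) : intBinom a 1 = (a : ℂ) := by simp [intBinom]

lemma intBinom_pascal (a : ℤ) (n : ℕ) :
    intBinom (a + 1) (n + 1) = intBinom a (n + 1) + intBinom a n := by
  unfold intBinom
  have hf' : ((n).factorial : ℂ) ≠ 0 := by exact_mod_cast (n).factorial_ne_zero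
  have hn1 : ((n:ℂ) + 1) ≠ 0 := by
    have : ((n:ℂ) + 1) = ((n+1 : ℕ) : ℂ) := by push_cast; ring
    rw [this]
    exact_mod_cast (n+1).succ_ne_zero
  have e1 : (∏ j ∈ Finset.range (n+1), (((a+1:ℤ):ℂ) - (j:ℂ))) =
      (∏ j ∈ Finset.range n, ((a:ℂ) - j)) * ((a:ℂ)+1) := by
    rw [Finset.prod_range_succ']
    congr 1
    · apply Finset.prod_congr rfl; intro x _; push_cast; ring
    · push_cast; ring
  have e2 : (∏ j ∈ Finset.range (n+1), ((a:ℂ) - (j:ℂ))) =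
      (∏ j ∈ Finset.range n, ((a:ℂ) - j)) * ((a:ℂ) - n) := Finset.prod_range_succ _ _
  rw [e1, e2, Nat.factorial_succ]
  push_cast
  field_simp
  ring

lemma intBinom_vand (a : ℤ) (i : ℕ) : ∀ n : ℕ,
    ∑ s ∈ Finset.range (n+1), (i.choose s : ℂ) * intBinom a (n - s) = intBinom (a + i) n := by
  induction i with
  | zero =>
    intro n
    rw [Finset.sum_eq_single 0]
    · simp
    · intro b _ hb0
      have : 0 < b := Nat.pos_of_ne_zero hb0
      simp [Nat.choose_eq_zero_of_lt this]
    · simp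
  | succ i ih =>
    intro n
    cases n with
    | zero => simp [intBinom_zero]
    | succ n =>
      rw [Finset.sum_range_succ']
      simp only [Nat.choose_succ_succ, Nat.cast_add, add_mul, Nat.succ_sub_succ]
      rw [Finset.sum_add_distrib]
      have h2 : (∑ s ∈ Finset.range (n+1), (i.choose (s+1) : ℂ) * intBinom a (n - s))
          + ((i+1).choose 0 : ℂ) * intBinom a (n + 1 - 0) = intBinom (a + i) (n+1) := by
        rw [← ih (n+1),
          Finset.sum_range_succ' (fun s => (i.choose s : ℂ) * intBinom a (n + 1 - s)) (n+1)]
        simp [Nat.succ_sub_succ]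
      rw [add_assoc, h2, ih n]
      push_cast
      rw [show a + ((i:ℤ) + 1) = (a + i) + 1 from by ring, intBinom_pascal]
      ring

/-- convolution of a polynomial against a `ℤ`-indexed family -/
noncomputable def conv {W : Type} [AddCommGroup W] [Module ℂ W]
    (r : Polynomial ℂ) (g : ℤ → W) (l : ℤ) : W :=
  r.sum fun j a => a • g (l - j)

/-- coefficient of `x₀^s` in `p(x₂+x₀,x₂)`, as a polynomial in `x₂` -/
noncomputable def qpoly (p : Polynomial (Polynomial ℂ)) (s : ℕ) : Polynomial ℂ :=
  ∑ i ∈ p.support, ∑ j ∈ (p.coeff i).support,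
    Polynomial.monomial (i - s + j) ((i.choose s : ℂ) * (p.coeff i).coeff j)

section ConvLemmas
variable {W : Type} [AddCommGroup W] [Module ℂ W]

lemma conv_zero (g : ℤ → W) (l : ℤ) : conv 0 g l = 0 := Polynomial.sum_zero_index _

lemma conv_add (r₁ r₂ : Polynomial ℂ) (g : ℤ → W) (l : ℤ) :
    conv (r₁ + r₂) g l = conv r₁ g l + conv r₂ g l :=
  Polynomial.sum_add_index _ _ _ (fun _ => zero_smul _ _) (fun _ b₁ b₂ => add_smul b₁ b₂ _)

lemma conv_monomial (k : ℕ) (a : ℂ) (g : ℤ → W) (l : ℤ) :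
    conv (Polynomial.monomial k a) g l = a • g (l - k) :=
  Polynomial.sum_monomial_index _ _ (zero_smul _ _)

lemma conv_finset_sum {α : Type} (t : Finset α) (r : α → Polynomial ℂ) (g : ℤ → W) (l : ℤ) :
    conv (∑ x ∈ t, r x) g l = ∑ x ∈ t, conv (r x) g l := by
  classical
  induction t using Finset.induction_on with
  | empty => simp [conv_zero]
  | insert x t' hx ih =>
                    rw [Finset.sum_insert hx, conv_add, ih, Finset.sum_insert hx]

lemma conv_qpoly (p : Polynomial (Polynomial ℂ)) (s : ℕ) (g : ℤ → W) (l : ℤ) :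
    conv (qpoly p s) g l = ∑ i ∈ p.support, ∑ j ∈ (p.coeff i).support,
      ((i.choose s : ℂ) * (p.coeff i).coeff j) • g (l - ((i - s + j : ℕ) : ℤ)) := by
  unfold qpoly
  rw [conv_finset_sum]
  exact Finset.sum_congr rfl fun i _ => by
    rw [conv_finset_sum]
    exact Finset.sum_congr rfl fun j _ => conv_monomial _ _ _ _

lemma conv_of_g_zero (r : Polynomial ℂ) (g : ℤ → W) (l : ℤ) (hg : ∀ l', g l' = 0) :
    conv r g l = 0 := by
  unfold conv Polynomial.sum
  apply Finset.sum_eq_zero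
  intro j _
  simp only [hg, smul_zero]

lemma conv_sub (r : Polynomial ℂ) (g h : ℤ → W) (l : ℤ) :
    conv r (fun l' => g l' - h l') l = conv r g l - conv r h l := by
  unfold conv Polynomial.sum
  rw [← Finset.sum_sub_distrib]
  exact Finset.sum_congr rfl fun j _ => smul_sub _ _ _

lemma qpoly_exists_ne_zero (p : Polynomial (Polynomial ℂ)) (hp : p ≠ 0) :
    ∃ s, qpoly p s ≠ 0 := by
  refine ⟨p.natDegree, ?_⟩
  have hmem := Polynomial.natDegree_mem_support_of_nonzero hp
  have : qpoly p p.natDegree = p.coeff p.natDegree := by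
    unfold qpoly
    rw [Finset.sum_eq_single p.natDegree]
    · rw [Finset.sum_congr rfl (fun j _ => by
        rw [Nat.choose_self, Nat.cast_one, one_mul, Nat.sub_self, Nat.zero_add])]
      exact (Polynomial.as_sum_support _).symm
    · intro i hi hne
      have hlt : i < p.natDegree := lt_of_le_of_ne (Polynomial.le_natDegree_of_mem_supp i hi) hne
      apply Finset.sum_eq_zero
      intro j _
      rw [Nat.choose_eq_zero_of_lt hlt, Nat.cast_zero, zero_mul, Polynomial.monomial_zero_right]
    · intro h; exact absurd hmem h
  rw [this]
  exact fun h => hp (Polynomial.leadingCoeff_eq_zero.mp h)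

lemma conv_injective (r : Polynomial ℂ) (hr : r ≠ 0) (g : ℤ → W)
    (hg : ∃ N : ℤ, ∀ l, N ≤ l → g l = 0) (h : ∀ l, conv r g l = 0) : ∀ l, g l = 0 := by
  by_contra hc
  push_neg at hc
  obtain ⟨N, hN⟩ := hg
  obtain ⟨l₀, hl₀, hmax⟩ := Int.exists_greatest_of_bdd (P := fun l => g l ≠ 0)
    ⟨N, fun z hz => by
      by_contra hzz
      push_neg at hzz
      exact hz (hN z (le_of_lt hzz))⟩ hc
  have hkey := h (l₀ + r.natDegree)
  unfold conv Polynomial.sum at hkey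
  rw [Finset.sum_eq_single r.natDegree] at hkey
  · have hlead : r.coeff r.natDegree ≠ 0 := fun hh => hr (Polynomial.leadingCoeff_eq_zero.mp hh)
    simp only [add_sub_cancel_right] at hkey
    rcases smul_eq_zero.mp hkey with h1 | h2
    · exact hlead h1
    · exact hl₀ h2
  · intro j hj hne
    have hjle : j ≤ r.natDegree := Polynomial.le_natDegree_of_mem_supp j hj
    have hlt : j < r.natDegree := lt_of_le_of_ne hjle hne
    have hz : g (l₀ + r.natDegree - j) = 0 := by
      by_contra hh
      exact absurd (hmax _ hh) (by omega)
    simp only [hz, smul_zero]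
  · intro hni
    exact absurd (Polynomial.natDegree_mem_support_of_nonzero hr) hni

lemma sum_cut {M : Type} [AddCommGroup M] (c i : ℕ) (f g : ℕ → M)
    (hfg : ∀ s, s ≤ c → s ≤ i → f s = g s)
    (hf : ∀ s, s ≤ c → i < s → f s = 0)
    (hg : ∀ s, s ≤ i → c < s → g s = 0) :
    ∑ s ∈ Finset.range (c+1), f s = ∑ s ∈ Finset.range (i+1), g s := by
  have h1 : ∑ s ∈ Finset.range (c+1), f s = ∑ s ∈ Finset.range (min c i + 1), f s := by
    refine (Finset.sum_subset (Finset.range_subset_range.mpr (by omega)) ?_).symm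
    intro x hx hnx
    simp only [Finset.mem_range] at hx hnx
    exact hf x (by omega) (by omega)
  have h2 : ∑ s ∈ Finset.range (i+1), g s = ∑ s ∈ Finset.range (min c i + 1), g s := by
    refine (Finset.sum_subset (Finset.range_subset_range.mpr (by omega)) ?_).symm
    intro x hx hnx
    simp only [Finset.mem_range] at hx hnx
    exact hg x (by omega) (by omega)
  rw [h1, h2]
  refine Finset.sum_congr rfl fun s hs => ?_
  simp only [Finset.mem_range] at hs
  exact hfg s (by omega) (by omega)

end ConvLemmas

/-- Let `V` be a nonlocal vertex algebra (vacuum `one`, vertex map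
`Y(v,x) = Σ_n (Y v n) x^{−n−1}` with truncation, vacuum and creation properties, and
weak associativity, stated coefficientwise), and let `(W, Y_W)` be a (left) quasi
`V`-module-at-infinity: `Y_W(𝟏,x) = id_W` and for all `u,v ∈ V` there is a nonzero
polynomial `p(x₁,x₂)` with `p(x₁,x₂)Y_W(u,x₁)Y_W(v,x₂) ∈ Hom(W,W((x₁⁻¹,x₂⁻¹)))` and
`p(x₂+x₀,x₂)Y_W(Y(u,x₀)v,x₂) = (p(x₁,x₂)Y_W(u,x₁)Y_W(v,x₂))|_{x₁=x₂+x₀}`.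
Then `Y_W(𝒟v, x) = (d/dx)Y_W(v,x)` for all `v`, where `𝒟v = v_{−2}𝟏`; i.e.
`(Y_W (𝒟v))_n = −n (Y_W v)_{n−1}` coefficientwise. -/
theorem stmt_12 (V W : Type) [AddCommGroup V] [Module ℂ V] [AddCommGroup W] [Module ℂ W]
    (Y : V → ℤ → V →ₗ[ℂ] V) (one : V)
    (hYadd : ∀ (n : ℤ) (u u' : V), Y (u + u') n = Y u n + Y u' n)
    (hYsmul : ∀ (n : ℤ) (c : ℂ) (u : V), Y (c • u) n = c • Y u n)
    (hYtrunc : ∀ u v : V, ∃ N : ℤ, ∀ n : ℤ, N ≤ n → Y u n v = 0)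
    (hvac : ∀ (n : ℤ) (v : V), Y one n v = if n = -1 then v else 0)
    (hcre0 : ∀ (v : V) (n : ℤ), 0 ≤ n → Y v n one = 0)
    (hcre1 : ∀ v : V, Y v (-1) one = v)
    (hassoc : ∀ u v w : V, ∃ l : ℕ, ∀ α β : ℤ,
      (∑ᶠ s : ℕ, intBinom (α + s) s • Y u ((l : ℤ) - 1 - s - α) (Y v ((s : ℤ) - β - 1) w))
        = ∑ s ∈ Finset.range (l + 1),
            (l.choose s : ℂ) • Y (Y u ((l : ℤ) - s - α - 1) v) ((s : ℤ) - β - 1) w)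
    (YW : V → ℤ → W →ₗ[ℂ] W)
    (hYWadd : ∀ (n : ℤ) (u u' : V), YW (u + u') n = YW u n + YW u' n)
    (hYWsmul : ∀ (n : ℤ) (c : ℂ) (u : V), YW (c • u) n = c • YW u n)
    (hYWtrunc : ∀ (v : V) (w : W), ∃ N : ℤ, ∀ n : ℤ, n ≤ N → YW v n w = 0)
    (hYWvac : ∀ (n : ℤ) (w : W), YW one n w = if n = -1 then w else 0)
    (hqm : ∀ u v : V, ∃ p : Polynomial (Polynomial ℂ), p ≠ 0 ∧
      (∀ w : W, ∃ N : ℤ, ∀ a b : ℤ, (N ≤ a ∨ N ≤ b) → prodCoef YW p u v a b w = 0) ∧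
      (∀ (c l : ℤ) (w : W), iterCoef Y YW p u v c l w =
        if 0 ≤ c then ∑ᶠ m : ℤ, intBinom m c.toNat • prodCoef YW p u v m (l + c - m) w
        else 0)) :
    ∀ (v : V) (n : ℤ) (w : W),
      YW (Y v (-2) one) n w = (-(n : ℂ)) • YW v (n - 1) w := by
  intro v n w
  obtain ⟨p, hp0, htr, hit⟩ := hqm v one
  -- YW of the zero vector is zero
  have hYW0 : ∀ (m : ℤ), YW (0:V) m = 0 := by
    intro m
    have h := hYWadd m 0 0
    rw [add_zero] at h
    have h3 : YW (0:V) m + YW 0 m = YW 0 m + 0 := by rw [← h, add_zero]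
    exact add_left_cancel h3
  -- the family F
  set F : ℕ → ℤ → W := fun c l =>
    YW (Y v (-(c:ℤ)-1) one) (-l-1) w - intBinom ((c:ℤ)+l) c • YW v (-l-1-(c:ℤ)) w with hF
  -- Claim 1 : the convolution identity
  have claim1 : ∀ (c : ℕ) (l : ℤ),
      ∑ s ∈ Finset.range (c+1), conv (qpoly p s) (F (c - s)) l = 0 := by
    intro c l
    have hsub : ∀ s, conv (qpoly p s) (F (c - s)) l =
        conv (qpoly p s) (fun l' => YW (Y v (-(((c-s:ℕ)):ℤ)-1) one) (-l'-1) w) l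
        - conv (qpoly p s) (fun l' =>
            intBinom (((c-s:ℕ):ℤ)+l') (c-s) • YW v (-l'-1-((c-s:ℕ):ℤ)) w) l := by
      intro s
      rw [← conv_sub]
    rw [Finset.sum_congr rfl fun s _ => hsub s, Finset.sum_sub_distrib]
    have hitc := hit (c:ℤ) l w
    rw [if_pos (by exact_mod_cast Nat.zero_le c : (0:ℤ) ≤ (c:ℤ)), Int.toNat_natCast] at hitc
    have hA : ∑ s ∈ Finset.range (c+1),
        conv (qpoly p s) (fun l' => YW (Y v (-(((c-s:ℕ)):ℤ)-1) one) (-l'-1) w) l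
        = iterCoef Y YW p v one c l w := by
      rw [Finset.sum_congr rfl fun s _ => conv_qpoly p s _ l, Finset.sum_comm]
      unfold iterCoef
      refine Finset.sum_congr rfl fun i _ => ?_
      rw [Finset.sum_comm]
      refine Finset.sum_congr rfl fun j _ => ?_
      refine sum_cut c i _ _ ?_ ?_ ?_
      · intro s hsc hsi
        rw [show (-(((c-s:ℕ)):ℤ)-1) = (s:ℤ) - (c:ℤ) - 1 from by omega,
          show (-(l - ((i-s+j:ℕ):ℤ))-1) = (i:ℤ)+(j:ℤ)-(s:ℤ)-l-1 from by omega,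
          mul_comm]
      · intro s _ his
        rw [Nat.choose_eq_zero_of_lt his, Nat.cast_zero, zero_mul, zero_smul]
      · intro s _ hcs
        rw [hcre0 v ((s:ℤ) - c - 1) (by omega), hYW0]
        simp
    have hB : ∑ s ∈ Finset.range (c+1),
        conv (qpoly p s) (fun l' =>
          intBinom (((c-s:ℕ):ℤ)+l') (c-s) • YW v (-l'-1-((c-s:ℕ):ℤ)) w) l
        = ∑ᶠ m : ℤ, intBinom m c • prodCoef YW p v one m (l + c - m) w := by
      rw [Finset.sum_congr rfl fun s _ => conv_qpoly p s _ l, Finset.sum_comm]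
      have hL : ∀ i ∈ p.support, ∑ s ∈ Finset.range (c+1), ∑ j ∈ (p.coeff i).support,
          ((i.choose s : ℂ) * (p.coeff i).coeff j) •
            (intBinom (((c-s:ℕ):ℤ) + (l - ((i-s+j:ℕ):ℤ))) (c-s) •
              YW v (-(l - ((i-s+j:ℕ):ℤ))-1-((c-s:ℕ):ℤ)) w)
          = ∑ j ∈ (p.coeff i).support,
              intBinom (l + c - j) c • ((p.coeff i).coeff j •
                YW v ((i:ℤ)+(j:ℤ)-l-(c:ℤ)-1) w) := by
        intro i _
        rw [Finset.sum_comm]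
        refine Finset.sum_congr rfl fun j _ => ?_
        have step : ∀ s ∈ Finset.range (c+1),
            ((i.choose s : ℂ) * (p.coeff i).coeff j) •
              (intBinom (((c-s:ℕ):ℤ) + (l - ((i-s+j:ℕ):ℤ))) (c-s) •
                YW v (-(l - ((i-s+j:ℕ):ℤ))-1-((c-s:ℕ):ℤ)) w)
            = ((i.choose s : ℂ) * intBinom (l + c - i - j) (c - s)) •
                ((p.coeff i).coeff j • YW v ((i:ℤ)+(j:ℤ)-l-(c:ℤ)-1) w) := by
          intro s hs
          simp only [Finset.mem_range] at hs
          rcases le_or_gt s i with hsi | his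
          · rw [show (((c-s:ℕ):ℤ) + (l - ((i-s+j:ℕ):ℤ))) = l + c - i - j from by omega,
              show (-(l - ((i-s+j:ℕ):ℤ))-1-((c-s:ℕ):ℤ)) = (i:ℤ)+(j:ℤ)-l-(c:ℤ)-1 from by omega,
              smul_smul, smul_smul]
            congr 1
            ring
          · rw [Nat.choose_eq_zero_of_lt his, Nat.cast_zero, zero_mul, zero_mul,
              zero_smul, zero_smul]
        rw [Finset.sum_congr rfl step, ← Finset.sum_smul, intBinom_vand (l + c - i - j) i c,
          show l + (c:ℤ) - i - j + i = l + c - j from by ring]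
      rw [Finset.sum_congr rfl hL]
      -- now handle the finsum on the RHS
      have hprod : ∀ a b : ℤ, prodCoef YW p v one a b w =
          ∑ i ∈ p.support, ∑ j ∈ (p.coeff i).support,
            (if (j:ℤ) = b then (p.coeff i).coeff j • YW v ((i:ℤ)-a-1) w else 0) := by
        intro a b
        unfold prodCoef
        refine Finset.sum_congr rfl fun i _ => Finset.sum_congr rfl fun j _ => ?_
        rw [hYWvac]
        by_cases hcond : (j:ℤ) - b - 1 = -1
        · rw [if_pos hcond, if_pos (by omega)]
        · rw [if_neg hcond, if_neg (by omega), map_zero, smul_zero]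
      set J : Finset ℤ :=
        (p.support.biUnion fun i => (p.coeff i).support).image (fun j : ℕ => l + (c:ℤ) - j)
        with hJ
      have hsupp : Function.support
          (fun m : ℤ => intBinom m c • prodCoef YW p v one m (l + c - m) w) ⊆ ↑J := by
        intro m hm
        simp only [Function.mem_support] at hm
        by_contra hmJ
        apply hm
        rw [hprod]
        rw [Finset.sum_eq_zero, smul_zero]
        intro i hi
        apply Finset.sum_eq_zero
        intro j hj
        rw [if_neg]
        intro hcond
        apply hmJ
        rw [hJ]
        simp only [Finset.mem_coe, Finset.mem_image, Finset.mem_biUnion]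
        exact ⟨j, ⟨i, hi, hj⟩, by omega⟩
      rw [finsum_eq_sum_of_support_subset _ hsupp]
      have hswap : ∑ m ∈ J, intBinom m c • prodCoef YW p v one m (l + c - m) w
          = ∑ i ∈ p.support, ∑ j ∈ (p.coeff i).support, ∑ m ∈ J,
              intBinom m c • (if (j:ℤ) = l + c - m then
                (p.coeff i).coeff j • YW v ((i:ℤ)-m-1) w else 0) := by
        rw [Finset.sum_congr rfl fun m _ => by rw [hprod, Finset.smul_sum]]
        rw [Finset.sum_comm]
        refine Finset.sum_congr rfl fun i _ => ?_
        rw [Finset.sum_congr rfl fun m _ => Finset.smul_sum]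
        rw [Finset.sum_comm]
      rw [hswap]
      symm
      refine Finset.sum_congr rfl fun i hi => Finset.sum_congr rfl fun j hj => ?_
      rw [Finset.sum_eq_single (l + (c:ℤ) - j)]
      · rw [if_pos (by omega), show (i:ℤ) - (l + c - j) - 1 = (i:ℤ)+(j:ℤ)-l-(c:ℤ)-1 from by ring]
      · intro m _ hne
        rw [if_neg (by omega), smul_zero]
      · intro hnot
        exfalso
        apply hnot
        rw [hJ]
        simp only [Finset.mem_image, Finset.mem_biUnion]
        exact ⟨j, ⟨i, hi, hj⟩, rfl⟩
    rw [hA, hB, hitc, sub_self]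
  -- boundedness of each F c
  have hFbdd : ∀ c : ℕ, ∃ N : ℤ, ∀ l, N ≤ l → F c l = 0 := by
    intro c
    obtain ⟨N₁, hN₁⟩ := hYWtrunc (Y v (-(c:ℤ)-1) one) w
    obtain ⟨N₂, hN₂⟩ := hYWtrunc v w
    refine ⟨max (-N₁-1) (-(N₂+1+c)), fun l hl => ?_⟩
    rw [hF]
    simp only []
    rw [hN₁ _ (by omega), hN₂ _ (by omega), smul_zero, sub_zero]
  -- minimal nonzero qpoly
  have hex := qpoly_exists_ne_zero p hp0
  set s₀ := Nat.find hex with hs₀def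
  have hs₀ : qpoly p s₀ ≠ 0 := Nat.find_spec hex
  have hs₀min : ∀ t, t < s₀ → qpoly p t = 0 := by
    intro t ht
    have := Nat.find_min hex (by omega : t < Nat.find hex)
    exact not_not.mp this
  -- main induction
  have key : ∀ c : ℕ, ∀ l : ℤ, F c l = 0 := by
    intro c
    induction c using Nat.strong_induction_on with
    | _ c ih =>
      refine conv_injective (qpoly p s₀) hs₀ (F c) (hFbdd c) ?_
      intro l
      have h := claim1 (c + s₀) l
      rw [Finset.sum_eq_single s₀] at h
      · rwa [show c + s₀ - s₀ = c from by omega] at h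
      · intro s hs hne
        simp only [Finset.mem_range] at hs
        rcases lt_or_gt_of_ne hne with hlt | hgt
        · rw [hs₀min s hlt, conv_zero]
        · exact conv_of_g_zero _ _ _ (ih (c + s₀ - s) (by omega))
      · intro hnot
        exact absurd (Finset.mem_range.mpr (by omega)) hnot
  -- conclude
  have hfin := key 1 (-n-1)
  rw [hF] at hfin
  simp only [Nat.cast_one] at hfin
  rw [sub_eq_zero] at hfin
  rw [show -(1:ℤ)-1 = -2 from by norm_num, show (-(-n-1)-1) = n from by ring] at hfin
  rw [show (1:ℤ) + (-n-1) = -n from by ring, intBinom_one] at hfin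
  rw [hfin]
  congr 1
  push_cast
  ring
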